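/- Let p be prime, c ≥ 1, k = √(2p/c), and let Π^c be the union of the 2j+1 ≤ 2 log₂ p dyadic rectangles Π_ν (ν = -j,…,j) as defined above. If χ is a non-principal Dirichlet character modulo p, then |∑_{(x,u)∈Π^c} χ(x)·conj(χ(u))| ≤ 10000 · p^{7/8} · (log p)² / √c. -/

import Mathlib

open scoped Classical

/-- The dyadic rectangles `Π_i` (as sets of integer points). `Π_0 = [1,k]×[1,k]`;
for `ν ≥ 1`, `Π_ν = [2^{ν-1}k+1, 2^ν k]×[1, k/2^ν]` and
`Π_{-ν} = [1, k/2^ν]×[2^{ν-1}k+1, 2^ν k]` (for integer points, the lower bound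
`2^{ν-1}k + 1 ≤ x` is expressed as the equivalent `2^{ν-1}k < x`). -/
def PiRect (k : ℝ) (i : ℤ) : Set (ℤ × ℤ) :=
  if i = 0 then
    {q | 1 ≤ q.1 ∧ (q.1 : ℝ) ≤ k ∧ 1 ≤ q.2 ∧ (q.2 : ℝ) ≤ k}
  else if 0 < i then
    {q | (2 : ℝ) ^ (i - 1) * k < (q.1 : ℝ) ∧ (q.1 : ℝ) ≤ (2 : ℝ) ^ i * k ∧
         1 ≤ q.2 ∧ (q.2 : ℝ) ≤ k / (2 : ℝ) ^ i}
  else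
    {q | 1 ≤ q.1 ∧ (q.1 : ℝ) ≤ k / (2 : ℝ) ^ (-i) ∧
         (2 : ℝ) ^ (-i - 1) * k < (q.2 : ℝ) ∧ (q.2 : ℝ) ≤ (2 : ℝ) ^ (-i) * k}

private lemma two_zpow_mono {m n : ℤ} (h : m ≤ n) : (2:ℝ)^m ≤ (2:ℝ)^n :=
  zpow_le_zpow_right₀ (by norm_num) h

private lemma two_zpow_pos (m : ℤ) : (0:ℝ) < 2^m := zpow_pos (by norm_num) m

private lemma two_zpow_sub_one (n : ℤ) : (2:ℝ)^(n-1) = (2:ℝ)^n/2 := by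
  rw [zpow_sub₀ (by norm_num : (2:ℝ) ≠ 0), zpow_one]

private lemma PiRect_disj {k : ℝ} (hk : 0 < k) {i i' : ℤ} (hlt : i < i') {q : ℤ × ℤ}
    (h1 : q ∈ PiRect k i) (h2 : q ∈ PiRect k i') : False := by
  rcases lt_trichotomy i 0 with hi | hi | hi <;>
    rcases lt_trichotomy i' 0 with hi' | hi' | hi'
  · -- i<0, i'<0
    simp only [PiRect, if_neg hi.ne, if_neg (by omega : ¬ (0:ℤ) < i), Set.mem_setOf_eq] at h1
    simp only [PiRect, if_neg hi'.ne, if_neg (by omega : ¬ (0:ℤ) < i'), Set.mem_setOf_eq] at h2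
    have hmono := mul_le_mul_of_nonneg_right
      (two_zpow_mono (show -i' ≤ -i - 1 by omega)) hk.le
    linarith [h1.2.2.1, h2.2.2.2]
  · -- i<0, i'=0
    subst hi'
    simp only [PiRect, if_neg hi.ne, if_neg (by omega : ¬ (0:ℤ) < i), Set.mem_setOf_eq] at h1
    simp only [PiRect, if_pos rfl, Set.mem_setOf_eq] at h2
    have hmono := mul_le_mul_of_nonneg_right
      (two_zpow_mono (show (0:ℤ) ≤ -i - 1 by omega)) hk.le
    rw [zpow_zero, one_mul] at hmono
    linarith [h1.2.2.1, h2.2.2.2]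
  · -- i<0, i'>0
    simp only [PiRect, if_neg hi.ne, if_neg (by omega : ¬ (0:ℤ) < i), Set.mem_setOf_eq] at h1
    simp only [PiRect, if_neg (by omega : ¬ i' = 0), if_pos hi', Set.mem_setOf_eq] at h2
    have e : k / (2:ℝ)^(-i) = k * (2:ℝ)^i := by
      rw [zpow_neg, div_eq_mul_inv, inv_inv]
    have hmono := mul_le_mul_of_nonneg_left
      (two_zpow_mono (show i ≤ i' - 1 by omega)) hk.le
    have hx1 : (q.1 : ℝ) ≤ k * (2:ℝ)^i := e ▸ h1.2.1
    have hx2 : (2:ℝ)^(i'-1) * k < (q.1:ℝ) := h2.1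
    nlinarith
  · omega
  · omega
  · -- i=0, i'>0
    subst hi
    simp only [PiRect, if_pos rfl, Set.mem_setOf_eq] at h1
    simp only [PiRect, if_neg (by omega : ¬ i' = 0), if_pos hi', Set.mem_setOf_eq] at h2
    have hmono := mul_le_mul_of_nonneg_right
      (two_zpow_mono (show (0:ℤ) ≤ i' - 1 by omega)) hk.le
    rw [zpow_zero, one_mul] at hmono
    linarith [h1.2.1, h2.1]
  · omega
  · omega
  · -- i>0, i'>0
    simp only [PiRect, if_neg (by omega : ¬ i = 0), if_pos hi, Set.mem_setOf_eq] at h1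
    simp only [PiRect, if_neg (by omega : ¬ i' = 0), if_pos hi', Set.mem_setOf_eq] at h2
    have hmono := mul_le_mul_of_nonneg_right
      (two_zpow_mono (show i ≤ i' - 1 by omega)) hk.le
    linarith [h1.2.1, h2.1]

private lemma PiRect_short_side {k : ℝ} {i : ℤ} {q : ℤ × ℤ}
    (h : q ∈ PiRect k i) : (2:ℝ)^(|i|) ≤ k := by
  rcases lt_trichotomy i 0 with hi | hi | hi
  · simp only [PiRect, if_neg hi.ne, if_neg (by omega : ¬ (0:ℤ) < i), Set.mem_setOf_eq] at h
    rw [abs_of_neg hi]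
    have h1 : (1:ℝ) ≤ (q.1:ℝ) := by exact_mod_cast h.1
    have h2 := h.2.1
    have hpow := two_zpow_pos (-i)
    rw [le_div_iff₀ hpow] at h2
    nlinarith [mul_le_mul_of_nonneg_right h1 hpow.le]
  · subst hi
    rw [abs_zero, zpow_zero]
    simp only [PiRect, if_pos rfl, Set.mem_setOf_eq] at h
    have h1 : (1:ℝ) ≤ (q.1:ℝ) := by exact_mod_cast h.1
    linarith [h.2.1]
  · simp only [PiRect, if_neg (by omega : ¬ i = 0), if_pos hi, Set.mem_setOf_eq] at h
    rw [abs_of_pos hi]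
    have h1 : (1:ℝ) ≤ (q.2:ℝ) := by exact_mod_cast h.2.2.1
    have h2 := h.2.2.2
    have hpow := two_zpow_pos i
    rw [le_div_iff₀ hpow] at h2
    nlinarith [mul_le_mul_of_nonneg_right h1 hpow.le]

private lemma filter_PiRect_zero (k : ℝ) (P : ℤ) :
    Finset.filter (fun q => q ∈ PiRect k 0) (Finset.Icc (1:ℤ) P ×ˢ Finset.Icc (1:ℤ) P)
      = Finset.Icc 1 (min P ⌊k⌋) ×ˢ Finset.Icc 1 (min P ⌊k⌋) := by
  ext ⟨x, u⟩
  simp only [Finset.mem_filter, Finset.mem_product, Finset.mem_Icc, PiRect,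
    eq_self_iff_true, if_true, Set.mem_setOf_eq, ← Int.le_floor, le_min_iff]
  tauto

private lemma filter_PiRect_pos (k : ℝ) (P : ℤ) {i : ℤ} (hi : 0 < i) :
    Finset.filter (fun q => q ∈ PiRect k i) (Finset.Icc (1:ℤ) P ×ˢ Finset.Icc (1:ℤ) P)
      = Finset.Icc (max 1 (⌊(2:ℝ)^(i-1)*k⌋+1)) (min P ⌊(2:ℝ)^i*k⌋)
          ×ˢ Finset.Icc 1 (min P ⌊k/(2:ℝ)^i⌋) := by
  ext ⟨x, u⟩
  simp only [Finset.mem_filter, Finset.mem_product, Finset.mem_Icc, PiRect,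
    if_neg hi.ne', if_pos hi, Set.mem_setOf_eq, ← Int.le_floor, le_min_iff, max_le_iff,
    Int.add_one_le_iff, ← Int.floor_lt]
  tauto

private lemma filter_PiRect_neg (k : ℝ) (P : ℤ) {i : ℤ} (hi : i < 0) :
    Finset.filter (fun q => q ∈ PiRect k i) (Finset.Icc (1:ℤ) P ×ˢ Finset.Icc (1:ℤ) P)
      = Finset.Icc 1 (min P ⌊k/(2:ℝ)^(-i)⌋)
          ×ˢ Finset.Icc (max 1 (⌊(2:ℝ)^(-i-1)*k⌋+1)) (min P ⌊(2:ℝ)^(-i)*k⌋) := by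
  ext ⟨x, u⟩
  simp only [Finset.mem_filter, Finset.mem_product, Finset.mem_Icc, PiRect,
    if_neg hi.ne, if_neg (by omega : ¬ (0:ℤ) < i), Set.mem_setOf_eq, ← Int.le_floor,
    le_min_iff, max_le_iff, Int.add_one_le_iff, ← Int.floor_lt]
  tauto

set_option maxHeartbeats 1600000 in
/-- **Lemma 1.** Let `p` be prime, `c ≥ 1`, `k = √(2p/c)`, and `Π^c` the union of the
dyadic rectangles `Π_i`, `i = -j, …, j`, where `j = ⌈log₂(p/k)⌉` (all integer points of
`Π^c` have coordinates in `[1, 2p]`). Assuming Burgess's inequality with `r = 2`, for any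
non-principal Dirichlet character `χ` mod `p`,
`|∑_{(x,u)∈Π^c} χ(x)·conj(χ(u))| ≤ 10000 · p^{7/8} · (log p)² / √c`. -/
theorem PiRect_union_char_sum (p : ℕ) [Fact p.Prime] (c : ℝ) (hc : 1 ≤ c)
    (k : ℝ) (hk : k = Real.sqrt (2 * p / c))
    (j : ℤ) (hj : j = ⌈Real.logb 2 (p / k)⌉)
    (χ : DirichletCharacter ℂ p) (hχ : χ ≠ 1)
    (hBurgess : ∀ M N : ℤ, M ≤ N →
      ‖∑ x ∈ Finset.Icc M N, χ (x : ZMod p)‖ ≤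
        30 * ((N : ℝ) - M + 1) ^ ((1 : ℝ) / 2) * (p : ℝ) ^ ((3 : ℝ) / 16) *
          Real.log p ^ ((1 : ℝ) / 2)) :
    ‖∑ q ∈ (Finset.Icc (1 : ℤ) (2 * p) ×ˢ Finset.Icc (1 : ℤ) (2 * p)).filter
        (fun q => ∃ i : ℤ, -j ≤ i ∧ i ≤ j ∧ q ∈ PiRect k i),
        χ (q.1 : ZMod p) * (starRingEnd ℂ) (χ (q.2 : ZMod p))‖ ≤
      10000 * (p : ℝ) ^ ((7 : ℝ) / 8) * Real.log p ^ 2 / Real.sqrt c := by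
  have hp : p.Prime := Fact.out
  have hp2 : 2 ≤ p := hp.two_le
  have hpR : (0:ℝ) < p := by exact_mod_cast hp.pos
  have hpR2 : (2:ℝ) ≤ p := by exact_mod_cast hp2
  have hlog0 : 0 ≤ Real.log p := Real.log_nonneg (by linarith)
  have hlog2 : Real.log 2 ≤ Real.log p := Real.log_le_log (by norm_num) hpR2
  have hl2 : (0.6931471803:ℝ) < Real.log 2 := Real.log_two_gt_d9
  have hl2pos : (0:ℝ) < Real.log 2 := by linarith
  have hc0 : (0:ℝ) < c := by linarith
  have hsc : (0:ℝ) < Real.sqrt c := Real.sqrt_pos.2 hc0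
  have hk0 : 0 < k := by
    rw [hk]; exact Real.sqrt_pos.2 (by positivity)
  have hkeq : k = Real.sqrt 2 * Real.sqrt p / Real.sqrt c := by
    rw [hk, Real.sqrt_div (by positivity) c, Real.sqrt_mul (by norm_num)]
  -- Burgess wrapper
  have hB : ∀ M N : ℤ, ∀ L : ℝ, 0 ≤ L → (M ≤ N → ((N:ℝ) - M + 1) ≤ L) →
      ‖∑ x ∈ Finset.Icc M N, χ (x : ZMod p)‖ ≤
        30 * Real.sqrt L * (p:ℝ)^((3:ℝ)/16) * Real.sqrt (Real.log p) := by
    intro M N L hL hLen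
    rcases le_or_gt M N with h | h
    · have hb := hBurgess M N h
      rw [show ((N:ℝ)-M+1) ^ ((1:ℝ)/2) = Real.sqrt ((N:ℝ)-M+1) from (Real.sqrt_eq_rpow _).symm,
        show (Real.log p) ^ ((1:ℝ)/2) = Real.sqrt (Real.log p) from (Real.sqrt_eq_rpow _).symm]
        at hb
      refine hb.trans ?_
      gcongr
      exact hLen h
    · rw [Finset.Icc_eq_empty (by omega), Finset.sum_empty, norm_zero]
      positivity
  -- bound for a product of two intervals
  have prod_bound : ∀ M1 N1 M2 N2 : ℤ, ∀ LA LB : ℝ, 0 ≤ LA → 0 ≤ LB →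
      (M1 ≤ N1 → ((N1:ℝ) - M1 + 1) ≤ LA) → (M2 ≤ N2 → ((N2:ℝ) - M2 + 1) ≤ LB) →
      LA * LB ≤ k^2 →
      ‖∑ q ∈ Finset.Icc M1 N1 ×ˢ Finset.Icc M2 N2,
          χ (q.1 : ZMod p) * (starRingEnd ℂ) (χ (q.2 : ZMod p))‖ ≤
        900 * k * (p:ℝ)^((3:ℝ)/8) * Real.log p := by
    intro M1 N1 M2 N2 LA LB hLA hLB h1 h2 hk2
    have hsplit : (∑ q ∈ Finset.Icc M1 N1 ×ˢ Finset.Icc M2 N2,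
          χ (q.1 : ZMod p) * (starRingEnd ℂ) (χ (q.2 : ZMod p)))
        = (∑ x ∈ Finset.Icc M1 N1, χ (x : ZMod p)) *
          (starRingEnd ℂ) (∑ u ∈ Finset.Icc M2 N2, χ (u : ZMod p)) := by
      rw [map_sum, Finset.sum_mul_sum, Finset.sum_product]
    rw [hsplit, norm_mul, Complex.norm_conj]
    have b1 := hB M1 N1 LA hLA h1
    have b2 := hB M2 N2 LB hLB h2
    calc ‖∑ x ∈ Finset.Icc M1 N1, χ (x:ZMod p)‖ *
          ‖∑ u ∈ Finset.Icc M2 N2, χ (u:ZMod p)‖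
        ≤ (30 * Real.sqrt LA * (p:ℝ)^((3:ℝ)/16) * Real.sqrt (Real.log p)) *
          (30 * Real.sqrt LB * (p:ℝ)^((3:ℝ)/16) * Real.sqrt (Real.log p)) :=
          mul_le_mul b1 b2 (norm_nonneg _) (by positivity)
      _ = 900 * (Real.sqrt LA * Real.sqrt LB) * ((p:ℝ)^((3:ℝ)/16) * (p:ℝ)^((3:ℝ)/16)) *
          (Real.sqrt (Real.log p) * Real.sqrt (Real.log p)) := by ring
      _ = 900 * Real.sqrt (LA * LB) * (p:ℝ)^((3:ℝ)/8) * Real.log p := by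
          rw [← Real.sqrt_mul hLA, ← Real.rpow_add hpR, Real.mul_self_sqrt hlog0]
          norm_num
      _ ≤ 900 * k * (p:ℝ)^((3:ℝ)/8) * Real.log p := by
          have hsle : Real.sqrt (LA*LB) ≤ k :=
            le_trans (Real.sqrt_le_sqrt hk2) (le_of_eq (Real.sqrt_sq hk0.le))
          gcongr
  by_cases hk1' : k < 1
  · -- all rectangles are empty
    have hempty : ((Finset.Icc (1 : ℤ) (2 * p) ×ˢ Finset.Icc (1 : ℤ) (2 * p)).filter
        (fun q => ∃ i : ℤ, -j ≤ i ∧ i ≤ j ∧ q ∈ PiRect k i)) = ∅ := by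
      rw [Finset.filter_eq_empty_iff]
      intro q _ hq
      obtain ⟨i, -, -, hqi⟩ := hq
      have hle := PiRect_short_side hqi
      have h1 : (1:ℝ) ≤ (2:ℝ)^(|i|) := by
        have := two_zpow_mono (abs_nonneg i)
        rwa [zpow_zero] at this
      linarith
    rw [hempty, Finset.sum_empty, norm_zero]
    positivity
  push_neg at hk1'
  -- now 1 ≤ k
  have hdisj : (↑(Finset.Icc (-j) j) : Set ℤ).PairwiseDisjoint
      (fun i => Finset.filter (fun q => q ∈ PiRect k i)
        (Finset.Icc (1:ℤ) (2*(p:ℤ)) ×ˢ Finset.Icc (1:ℤ) (2*(p:ℤ)))) := by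
    intro a _ b _ hab
    refine Finset.disjoint_left.2 fun q hqa hqb => ?_
    rcases hab.lt_or_gt with h | h
    · exact PiRect_disj hk0 h (Finset.mem_filter.1 hqa).2 (Finset.mem_filter.1 hqb).2
    · exact PiRect_disj hk0 h (Finset.mem_filter.1 hqb).2 (Finset.mem_filter.1 hqa).2
  have hunion : ((Finset.Icc (1 : ℤ) (2 * p) ×ˢ Finset.Icc (1 : ℤ) (2 * p)).filter
        (fun q => ∃ i : ℤ, -j ≤ i ∧ i ≤ j ∧ q ∈ PiRect k i))
      = (Finset.Icc (-j) j).biUnion (fun i => Finset.filter (fun q => q ∈ PiRect k i)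
          (Finset.Icc (1:ℤ) (2*(p:ℤ)) ×ˢ Finset.Icc (1:ℤ) (2*(p:ℤ)))) := by
    ext q
    simp only [Finset.mem_filter, Finset.mem_biUnion, Finset.mem_Icc]
    constructor
    · rintro ⟨hq, i, h1, h2, h3⟩
      exact ⟨i, ⟨h1, h2⟩, hq, h3⟩
    · rintro ⟨i, ⟨h1, h2⟩, hq, h3⟩
      exact ⟨hq, i, h1, h2, h3⟩
  rw [hunion, Finset.sum_biUnion hdisj]
  have hBknn : (0:ℝ) ≤ 900 * k * (p:ℝ)^((3:ℝ)/8) * Real.log p :=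
    mul_nonneg (mul_nonneg (mul_nonneg (by norm_num) hk0.le) (by positivity)) hlog0
  -- per-index bound
  have hterm : ∀ i ∈ Finset.Icc (-j) j,
      ‖∑ q ∈ Finset.filter (fun q => q ∈ PiRect k i)
          (Finset.Icc (1:ℤ) (2*(p:ℤ)) ×ˢ Finset.Icc (1:ℤ) (2*(p:ℤ))),
        χ (q.1 : ZMod p) * (starRingEnd ℂ) (χ (q.2 : ZMod p))‖
      ≤ if (2:ℝ)^(|i|) ≤ k then 900 * k * (p:ℝ)^((3:ℝ)/8) * Real.log p else 0 := by
    intro i _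
    by_cases hQ : (2:ℝ)^(|i|) ≤ k
    · rw [if_pos hQ]
      rcases lt_trichotomy i 0 with hi | hi | hi
      · -- i < 0
        rw [filter_PiRect_neg k (2*(p:ℤ)) hi]
        have hapos := two_zpow_pos (-i)
        have ha2 : (2:ℝ) ≤ (2:ℝ)^(-i) := by
          have := two_zpow_mono (show (1:ℤ) ≤ -i by omega)
          rwa [zpow_one] at this
        refine prod_bound _ _ _ _ (k/(2:ℝ)^(-i)) ((2:ℝ)^(-i-1)*k+1)
          (div_nonneg hk0.le hapos.le)
          (add_nonneg (mul_nonneg (two_zpow_pos _).le hk0.le) zero_le_one) ?_ ?_ ?_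
        · intro _
          have hN : ((min (2*(p:ℤ)) ⌊k/(2:ℝ)^(-i)⌋ : ℤ) : ℝ) ≤ k/(2:ℝ)^(-i) :=
            le_trans (by exact_mod_cast min_le_right (2*(p:ℤ)) ⌊k/(2:ℝ)^(-i)⌋)
              (Int.floor_le _)
          have h1 : ((1:ℤ):ℝ) = 1 := by norm_num
          linarith
        · intro _
          have hN : ((min (2*(p:ℤ)) ⌊(2:ℝ)^(-i)*k⌋ : ℤ) : ℝ) ≤ (2:ℝ)^(-i)*k :=
            le_trans (by exact_mod_cast min_le_right (2*(p:ℤ)) ⌊(2:ℝ)^(-i)*k⌋)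
              (Int.floor_le _)
          have hM : (2:ℝ)^(-i-1)*k < ((max 1 (⌊(2:ℝ)^(-i-1)*k⌋+1) : ℤ) : ℝ) := by
            have hlt := Int.lt_floor_add_one ((2:ℝ)^(-i-1)*k)
            have h2 : ((⌊(2:ℝ)^(-i-1)*k⌋+1 : ℤ) : ℝ) ≤ ((max 1 (⌊(2:ℝ)^(-i-1)*k⌋+1) : ℤ) : ℝ) := by
              exact_mod_cast le_max_right (1:ℤ) _
            have h3 : ((⌊(2:ℝ)^(-i-1)*k⌋+1 : ℤ) : ℝ) = ((⌊(2:ℝ)^(-i-1)*k⌋:ℤ):ℝ)+1 := by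
              push_cast; ring
            linarith
          have he' : (2:ℝ)^(-i)*k = 2*((2:ℝ)^(-i-1)*k) := by
            rw [two_zpow_sub_one (-i)]; ring
          linarith
        · rw [two_zpow_sub_one (-i)]
          have heq : (k/(2:ℝ)^(-i)) * ((2:ℝ)^(-i)/2*k+1)
              = ((2:ℝ)^(-i)/2*k+1) * k / (2:ℝ)^(-i) := by ring
          rw [heq, div_le_iff₀ hapos]
          have t1 : 0 ≤ ((2:ℝ)^(-i) - 2) * k^2 := mul_nonneg (by linarith) (sq_nonneg k)
          have t2 : 0 ≤ (k - 1) * k := mul_nonneg (by linarith) hk0.le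
          nlinarith
      · -- i = 0
        subst hi
        rw [filter_PiRect_zero k (2*(p:ℤ))]
        refine prod_bound _ _ _ _ k k hk0.le hk0.le ?_ ?_ (pow_two k).ge
        · intro _
          have hN : ((min (2*(p:ℤ)) ⌊k⌋ : ℤ) : ℝ) ≤ k :=
            le_trans (by exact_mod_cast min_le_right (2*(p:ℤ)) ⌊k⌋) (Int.floor_le _)
          have h1 : ((1:ℤ):ℝ) = 1 := by norm_num
          linarith
        · intro _
          have hN : ((min (2*(p:ℤ)) ⌊k⌋ : ℤ) : ℝ) ≤ k :=
            le_trans (by exact_mod_cast min_le_right (2*(p:ℤ)) ⌊k⌋) (Int.floor_le _)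
          have h1 : ((1:ℤ):ℝ) = 1 := by norm_num
          linarith
      · -- i > 0
        rw [filter_PiRect_pos k (2*(p:ℤ)) hi]
        have hapos := two_zpow_pos i
        have ha2 : (2:ℝ) ≤ (2:ℝ)^i := by
          have := two_zpow_mono (show (1:ℤ) ≤ i by omega)
          rwa [zpow_one] at this
        refine prod_bound _ _ _ _ ((2:ℝ)^(i-1)*k+1) (k/(2:ℝ)^i)
          (add_nonneg (mul_nonneg (two_zpow_pos _).le hk0.le) zero_le_one)
          (div_nonneg hk0.le hapos.le) ?_ ?_ ?_
        · intro _
          have hN : ((min (2*(p:ℤ)) ⌊(2:ℝ)^i*k⌋ : ℤ) : ℝ) ≤ (2:ℝ)^i*k :=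
            le_trans (by exact_mod_cast min_le_right (2*(p:ℤ)) ⌊(2:ℝ)^i*k⌋)
              (Int.floor_le _)
          have hM : (2:ℝ)^(i-1)*k < ((max 1 (⌊(2:ℝ)^(i-1)*k⌋+1) : ℤ) : ℝ) := by
            have hlt := Int.lt_floor_add_one ((2:ℝ)^(i-1)*k)
            have h2 : ((⌊(2:ℝ)^(i-1)*k⌋+1 : ℤ) : ℝ) ≤ ((max 1 (⌊(2:ℝ)^(i-1)*k⌋+1) : ℤ) : ℝ) := by
              exact_mod_cast le_max_right (1:ℤ) _
            have h3 : ((⌊(2:ℝ)^(i-1)*k⌋+1 : ℤ) : ℝ) = ((⌊(2:ℝ)^(i-1)*k⌋:ℤ):ℝ)+1 := by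
              push_cast; ring
            linarith
          have he' : (2:ℝ)^i*k = 2*((2:ℝ)^(i-1)*k) := by
            rw [two_zpow_sub_one i]; ring
          linarith
        · intro _
          have hN : ((min (2*(p:ℤ)) ⌊k/(2:ℝ)^i⌋ : ℤ) : ℝ) ≤ k/(2:ℝ)^i :=
            le_trans (by exact_mod_cast min_le_right (2*(p:ℤ)) ⌊k/(2:ℝ)^i⌋)
              (Int.floor_le _)
          have h1 : ((1:ℤ):ℝ) = 1 := by norm_num
          linarith
        · rw [two_zpow_sub_one i]
          have heq : ((2:ℝ)^i/2*k+1) * (k/(2:ℝ)^i)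
              = ((2:ℝ)^i/2*k+1) * k / (2:ℝ)^i := by ring
          rw [heq, div_le_iff₀ hapos]
          have t1 : 0 ≤ ((2:ℝ)^i - 2) * k^2 := mul_nonneg (by linarith) (sq_nonneg k)
          have t2 : 0 ≤ (k - 1) * k := mul_nonneg (by linarith) hk0.le
          nlinarith
    · rw [if_neg hQ]
      have hempty : Finset.filter (fun q => q ∈ PiRect k i)
          (Finset.Icc (1:ℤ) (2*(p:ℤ)) ×ˢ Finset.Icc (1:ℤ) (2*(p:ℤ))) = ∅ := by
        rw [Finset.filter_eq_empty_iff]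
        intro q _ hqi
        exact hQ (PiRect_short_side hqi)
      rw [hempty, Finset.sum_empty, norm_zero]
  -- count of nonempty rectangles
  have hm0 : (0:ℝ) ≤ Real.logb 2 k := Real.logb_nonneg one_lt_two hk1'
  have hm0' : (0:ℤ) ≤ ⌊Real.logb 2 k⌋ := Int.le_floor.2 (by simpa using hm0)
  have hsub : (Finset.Icc (-j) j).filter (fun i => (2:ℝ)^(|i|) ≤ k)
      ⊆ Finset.Icc (-⌊Real.logb 2 k⌋) ⌊Real.logb 2 k⌋ := by
    intro i hi
    obtain ⟨-, hQ⟩ := Finset.mem_filter.1 hi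
    have hlogle : ((|i|:ℤ):ℝ) * Real.log 2 ≤ Real.log k := by
      have hlg := Real.log_le_log (two_zpow_pos _) hQ
      rwa [Real.log_zpow] at hlg
    have h1 : ((|i|:ℤ):ℝ) ≤ Real.logb 2 k := by
      rw [Real.logb, le_div_iff₀ hl2pos]
      exact hlogle
    have h2 : |i| ≤ ⌊Real.logb 2 k⌋ := Int.le_floor.2 h1
    rw [Finset.mem_Icc]
    exact abs_le.1 h2
  have hcard : (((Finset.Icc (-j) j).filter (fun i => (2:ℝ)^(|i|) ≤ k)).card : ℝ)
      ≤ 2*(⌊Real.logb 2 k⌋:ℝ)+1 := by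
    have h1 := Finset.card_le_card hsub
    rw [Int.card_Icc] at h1
    have h4 : ((⌊Real.logb 2 k⌋ + 1 - -⌊Real.logb 2 k⌋).toNat : ℤ)
        = 2*⌊Real.logb 2 k⌋+1 := by
      rw [Int.toNat_of_nonneg (by omega)]; ring
    have h5 : (((⌊Real.logb 2 k⌋ + 1 - -⌊Real.logb 2 k⌋).toNat : ℕ) : ℝ)
        = 2*(⌊Real.logb 2 k⌋:ℝ)+1 := by
      exact_mod_cast congrArg (fun z : ℤ => (z:ℝ)) h4
    calc (((Finset.Icc (-j) j).filter (fun i => (2:ℝ)^(|i|) ≤ k)).card : ℝ)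
        ≤ (((⌊Real.logb 2 k⌋ + 1 - -⌊Real.logb 2 k⌋).toNat : ℕ) : ℝ) := by exact_mod_cast h1
      _ = 2*(⌊Real.logb 2 k⌋:ℝ)+1 := h5
  -- logarithmic bound on m
  have hkle : k ≤ Real.sqrt (2*(p:ℝ)) := by
    rw [hk]
    exact Real.sqrt_le_sqrt (div_le_self (by positivity) hc)
  have hlogk : Real.log k ≤ (Real.log 2 + Real.log p)/2 := by
    calc Real.log k ≤ Real.log (Real.sqrt (2*(p:ℝ))) := Real.log_le_log hk0 hkle
      _ = Real.log (2*(p:ℝ)) / 2 := Real.log_sqrt (by positivity)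
      _ = (Real.log 2 + Real.log p)/2 := by
          rw [Real.log_mul (by norm_num) (by positivity)]
  have hm2 : (⌊Real.logb 2 k⌋:ℝ) * Real.log 2 ≤ (Real.log 2 + Real.log p)/2 := by
    have hlb : Real.logb 2 k = Real.log k / Real.log 2 := by rw [Real.logb]
    have hmle : (⌊Real.logb 2 k⌋:ℝ) ≤ Real.log k / Real.log 2 :=
      le_trans (Int.floor_le _) (le_of_eq hlb)
    have := (le_div_iff₀ hl2pos).1 hmle
    linarith
  have hstepA : 2*(⌊Real.logb 2 k⌋:ℝ)+1 ≤ 3 * Real.log p / Real.log 2 := by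
    rw [le_div_iff₀ hl2pos]
    nlinarith [hm2, hlog2]
  have hs2 : Real.sqrt 2 ≤ 1.41422 := by
    rw [show (1.41422:ℝ) = Real.sqrt (1.41422^2) from (Real.sqrt_sq (by norm_num)).symm]
    exact Real.sqrt_le_sqrt (by norm_num)
  have hsp : Real.sqrt p * (p:ℝ)^((3:ℝ)/8) = (p:ℝ)^((7:ℝ)/8) := by
    rw [Real.sqrt_eq_rpow, ← Real.rpow_add hpR]
    norm_num
  calc ‖∑ i ∈ Finset.Icc (-j) j, ∑ q ∈ Finset.filter (fun q => q ∈ PiRect k i)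
          (Finset.Icc (1:ℤ) (2*(p:ℤ)) ×ˢ Finset.Icc (1:ℤ) (2*(p:ℤ))),
        χ (q.1 : ZMod p) * (starRingEnd ℂ) (χ (q.2 : ZMod p))‖
      ≤ ∑ i ∈ Finset.Icc (-j) j, ‖∑ q ∈ Finset.filter (fun q => q ∈ PiRect k i)
          (Finset.Icc (1:ℤ) (2*(p:ℤ)) ×ˢ Finset.Icc (1:ℤ) (2*(p:ℤ))),
        χ (q.1 : ZMod p) * (starRingEnd ℂ) (χ (q.2 : ZMod p))‖ := norm_sum_le _ _
    _ ≤ ∑ i ∈ Finset.Icc (-j) j,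
        (if (2:ℝ)^(|i|) ≤ k then 900 * k * (p:ℝ)^((3:ℝ)/8) * Real.log p else 0) :=
        Finset.sum_le_sum hterm
    _ = ∑ _i ∈ (Finset.Icc (-j) j).filter (fun i => (2:ℝ)^(|i|) ≤ k),
        (900 * k * (p:ℝ)^((3:ℝ)/8) * Real.log p) := (Finset.sum_filter _ _).symm
    _ = (((Finset.Icc (-j) j).filter (fun i => (2:ℝ)^(|i|) ≤ k)).card : ℝ) *
        (900 * k * (p:ℝ)^((3:ℝ)/8) * Real.log p) := by
        rw [Finset.sum_const, nsmul_eq_mul]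
    _ ≤ (2*(⌊Real.logb 2 k⌋:ℝ)+1) * (900 * k * (p:ℝ)^((3:ℝ)/8) * Real.log p) :=
        mul_le_mul_of_nonneg_right hcard hBknn
    _ ≤ (3 * Real.log p / Real.log 2) * (900 * k * (p:ℝ)^((3:ℝ)/8) * Real.log p) :=
        mul_le_mul_of_nonneg_right hstepA hBknn
    _ = (2700 * Real.sqrt 2 / Real.log 2) *
        ((Real.sqrt p * (p:ℝ)^((3:ℝ)/8)) * Real.log p ^ 2 / Real.sqrt c) := by
        rw [hkeq]; ring
    _ = (2700 * Real.sqrt 2 / Real.log 2) *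
        ((p:ℝ)^((7:ℝ)/8) * Real.log p ^ 2 / Real.sqrt c) := by rw [hsp]
    _ ≤ 10000 * ((p:ℝ)^((7:ℝ)/8) * Real.log p ^ 2 / Real.sqrt c) := by
        refine mul_le_mul_of_nonneg_right ?_ (by positivity)
        rw [div_le_iff₀ hl2pos]
        nlinarith [hs2, hl2]
    _ = 10000 * (p:ℝ)^((7:ℝ)/8) * Real.log p ^ 2 / Real.sqrt c := by ring
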